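/- Let x, y ∈ ℝ³ be unit vectors with r := arccos⟨x,y⟩ satisfying 0 < r < π, and set e₁^x = (sin r)⁻¹ • (y − cos r • x), e₁^y = (sin r)⁻¹ • (cos r • y − x), e₂^x = x × e₁^x and e₂^y = y × e₁^y (cross products in ℝ³). Let u, v ∈ ℝ³ with ⟨u,x⟩ = 0 and ⟨v,y⟩ = 0, and define the geodesics γx(t) = cos(‖u‖t) • x + (sin(‖u‖t)/‖u‖) • u and γy(t) = cos(‖v‖t) • y + (sin(‖v‖t)/‖v‖) • v (with the convention that the coefficient of u is 0 when u = 0, as given by division by zero, and similarly for v). Writing u₂ = ⟨u, e₂^x⟩ and v₂ = ⟨v, e₂^y⟩, the second derivative at t = 0 of t ↦ arccos⟨γx(t), γy(t)⟩ equals (u₂² + v₂²)·cot r − 2·u₂·v₂ / sin r. (This is the Hessian of the spherical distance, i.e. the constant-curvature case k = 1 of the Hessian formula Hess(ρ)((u,v),(u,v)) = √k (u₂² + v₂²) cot(√k r) − 2√k u₂ v₂ / sin(√k r).) -/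

import Mathlib

open Real Filter Topology

/-- The cross product on `ℝ³` (with the Euclidean inner product structure). -/
noncomputable def cross3 (a b : EuclideanSpace ℝ (Fin 3)) : EuclideanSpace ℝ (Fin 3) :=
  (WithLp.equiv 2 (Fin 3 → ℝ)).symm
    ![a 1 * b 2 - a 2 * b 1, a 2 * b 0 - a 0 * b 2, a 0 * b 1 - a 1 * b 0]

lemma cross3_eq1 (c d : ℝ) (x y : EuclideanSpace ℝ (Fin 3)) :
    cross3 x (c • (y - d • x)) = c • cross3 x y := by
  ext i
  fin_cases i <;>
    simp [cross3, WithLp.equiv_symm_apply, PiLp.smul_apply, PiLp.sub_apply] <;> ring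

lemma cross3_eq2 (c d : ℝ) (x y : EuclideanSpace ℝ (Fin 3)) :
    cross3 y (c • (d • y - x)) = c • cross3 x y := by
  ext i
  fin_cases i <;>
    simp [cross3, WithLp.equiv_symm_apply, PiLp.smul_apply, PiLp.sub_apply] <;> ring

lemma gram2 (u v x y : EuclideanSpace ℝ (Fin 3)) :
    (inner ℝ u (cross3 x y) : ℝ) * (inner ℝ v (cross3 x y) : ℝ) =
      (inner ℝ u v : ℝ) * ((inner ℝ x x : ℝ) * (inner ℝ y y : ℝ) - (inner ℝ x y : ℝ) ^ 2)
      - (inner ℝ u x : ℝ) * ((inner ℝ v x : ℝ) * (inner ℝ y y : ℝ) - (inner ℝ x y : ℝ) * (inner ℝ v y : ℝ))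
      + (inner ℝ u y : ℝ) * ((inner ℝ v x : ℝ) * (inner ℝ x y : ℝ) - (inner ℝ x x : ℝ) * (inner ℝ v y : ℝ)) := by
  simp [cross3, PiLp.inner_apply, RCLike.inner_apply, conj_trivial, Fin.sum_univ_three,
    WithLp.equiv_symm_apply, -inner_self_eq_norm_sq_to_K]
  ring

lemma arccos_iteratedDeriv2 (F F' : ℝ → ℝ) (k : ℝ)
    (hF : ∀ t, HasDerivAt F (F' t) t) (hF' : HasDerivAt F' k 0)
    (h1 : -1 < F 0) (h2 : F 0 < 1) :
    iteratedDeriv 2 (fun t => Real.arccos (F t)) 0 =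
      -k / Real.sqrt (1 - F 0 ^ 2) -
        F 0 * (F' 0) ^ 2 / Real.sqrt (1 - F 0 ^ 2) ^ 3 := by
  have hFc : Continuous F := continuous_iff_continuousAt.2 fun t => (hF t).continuousAt
  set G : ℝ → ℝ := fun t => -(1 / Real.sqrt (1 - F t ^ 2)) * F' t with hG
  have hs : ∀ᶠ t in 𝓝 (0:ℝ), F t ∈ Set.Ioo (-1:ℝ) 1 :=
    hFc.continuousAt.preimage_mem_nhds (Ioo_mem_nhds h1 h2)
  have hderiv : ∀ᶠ t in 𝓝 (0:ℝ), HasDerivAt (fun t => Real.arccos (F t)) (G t) t := by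
    filter_upwards [hs] with t ht
    exact (Real.hasDerivAt_arccos (ne_of_gt ht.1) (ne_of_lt ht.2)).comp t (hF t)
  have hEq : deriv (fun t => Real.arccos (F t)) =ᶠ[𝓝 (0:ℝ)] G := by
    filter_upwards [hderiv] with t ht using ht.deriv
  have hD : (0:ℝ) < 1 - F 0 ^ 2 := by nlinarith
  have hsq : 0 < Real.sqrt (1 - F 0 ^ 2) := Real.sqrt_pos.2 hD
  have h0 : HasDerivAt (fun t => 1 - F t ^ 2) (-(2 * F 0 * F' 0)) 0 := by
    have := ((hF 0).pow 2).const_sub 1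
    convert this using 1
    · rfl
    · rfl
    · rfl
    push_cast
    ring
  have hQ : HasDerivAt (fun t => Real.sqrt (1 - F t ^ 2))
      (-(2 * F 0 * F' 0) / (2 * Real.sqrt (1 - F 0 ^ 2))) 0 :=
    h0.sqrt (ne_of_gt hD)
  have hGder : HasDerivAt G
      ((-((0 * Real.sqrt (1 - F 0 ^ 2) - 1 * (-(2 * F 0 * F' 0) / (2 * Real.sqrt (1 - F 0 ^ 2)))) /
        Real.sqrt (1 - F 0 ^ 2) ^ 2)) * F' 0 + (-(1 / Real.sqrt (1 - F 0 ^ 2))) * k) 0 :=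
    (((hasDerivAt_const (0:ℝ) (1:ℝ)).div hQ (ne_of_gt hsq)).neg).mul hF'
  rw [show (2:ℕ) = 1 + 1 from rfl, iteratedDeriv_succ, iteratedDeriv_one,
    Filter.EventuallyEq.deriv_eq hEq, hGder.deriv]
  have hsd2 : Real.sqrt (1 - F 0 ^ 2) ^ 2 = 1 - F 0 ^ 2 := Real.sq_sqrt hD.le
  set sd := Real.sqrt (1 - F 0 ^ 2) with hsd
  field_simp
  ring_nf

noncomputable def Ffun (a b p q s w : ℝ) : ℝ → ℝ := fun t =>
  Real.cos (a*t) * Real.cos (b*t) * p + Real.cos (a*t) * (Real.sin (b*t)/b) * q +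
  (Real.sin (a*t)/a) * Real.cos (b*t) * s + (Real.sin (a*t)/a) * (Real.sin (b*t)/b) * w

noncomputable def F1fun (a b p q s w : ℝ) : ℝ → ℝ := fun t =>
  (-Real.sin (a*t) * a * Real.cos (b*t) + Real.cos (a*t) * (-Real.sin (b*t) * b)) * p +
  (-Real.sin (a*t) * a * (Real.sin (b*t)/b) + Real.cos (a*t) * (Real.cos (b*t) * b / b)) * q +
  ((Real.cos (a*t) * a / a) * Real.cos (b*t) + (Real.sin (a*t)/a) * (-Real.sin (b*t) * b)) * s +
  ((Real.cos (a*t) * a / a) * (Real.sin (b*t)/b) + (Real.sin (a*t)/a) * (Real.cos (b*t) * b / b)) * w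

lemma hca (a : ℝ) (t : ℝ) : HasDerivAt (fun t => Real.cos (a*t)) (-Real.sin (a*t) * a) t := by
  simpa using ((hasDerivAt_id t).const_mul a).cos

lemma hsa (a : ℝ) (t : ℝ) : HasDerivAt (fun t => Real.sin (a*t)/a) (Real.cos (a*t) * a / a) t := by
  simpa using (((hasDerivAt_id t).const_mul a).sin).div_const a

lemma hFderiv (a b p q s w : ℝ) :
    ∀ t, HasDerivAt (Ffun a b p q s w) (F1fun a b p q s w t) t := fun t =>
  (((((hca a t).mul (hca b t)).mul_const p).add
    (((hca a t).mul (hsa b t)).mul_const q)).add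
    (((hsa a t).mul (hca b t)).mul_const s)).add
    (((hsa a t).mul (hsa b t)).mul_const w)

lemma hF1deriv (a b p q s w : ℝ) : HasDerivAt (F1fun a b p q s w)
    (-((a^2 + b^2) * p) + 2 * ((a/a) * (b/b)) * w) 0 := by
  have h1 : ∀ c t : ℝ, HasDerivAt (fun t => -Real.sin (c*t) * c) (-(Real.cos (c*t) * c) * c) t :=
    fun c t => by simpa using ((((hasDerivAt_id t).const_mul c).sin).neg).mul_const c
  have h2 : ∀ c t : ℝ, HasDerivAt (fun t => Real.cos (c*t) * c / c) (-Real.sin (c*t) * c * c / c) t :=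
    fun c t => by simpa using (((hca c t).mul_const c)).div_const c
  have := (((((h1 a 0).mul (hca b 0)).add ((hca a 0).mul (h1 b 0))).mul_const p).add
      ((((h1 a 0).mul (hsa b 0)).add ((hca a 0).mul (h2 b 0))).mul_const q)).add
      (((((h2 a 0).mul (hca b 0)).add ((hsa a 0).mul (h1 b 0))).mul_const s).add
      ((((h2 a 0).mul (hsa b 0)).add ((hsa a 0).mul (h2 b 0))).mul_const w))
  convert this using 1
  · rfl
  · rfl
  · funext t; simp [F1fun]; ring
  · norm_num
    ring

/-- The Hessian of the spherical distance (curvature `k = 1`): for unit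
vectors `x, y ∈ ℝ³` at spherical distance `r = arccos⟨x,y⟩ ∈ (0,π)`, tangent vectors `u ⊥ x`,
`v ⊥ y`, and the great-circle geodesics through `x, y` with velocities `u, v`, the second
derivative at `0` of the spherical distance between the geodesics equals
`(u₂² + v₂²)·cot r − 2·u₂·v₂ / sin r`, where `u₂ = ⟨u, e₂^x⟩`, `v₂ = ⟨v, e₂^y⟩`. -/
theorem spherical_distance_second_variation
    (x y u v : EuclideanSpace ℝ (Fin 3)) (hx : ‖x‖ = 1) (hy : ‖y‖ = 1)
    (r : ℝ) (hr : r = Real.arccos (inner ℝ x y))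
    (hr0 : 0 < r) (hrπ : r < Real.pi)
    (hux : (inner ℝ u x : ℝ) = 0) (hvy : (inner ℝ v y : ℝ) = 0)
    (e1x e1y e2x e2y : EuclideanSpace ℝ (Fin 3))
    (he1x : e1x = (Real.sin r)⁻¹ • (y - Real.cos r • x))
    (he1y : e1y = (Real.sin r)⁻¹ • (Real.cos r • y - x))
    (he2x : e2x = cross3 x e1x) (he2y : e2y = cross3 y e1y) :
    iteratedDeriv 2
        (fun t =>
          Real.arccos
            (inner ℝ (Real.cos (‖u‖ * t) • x + (Real.sin (‖u‖ * t) / ‖u‖) • u)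
              (Real.cos (‖v‖ * t) • y + (Real.sin (‖v‖ * t) / ‖v‖) • v) : ℝ)) 0 =
      ((inner ℝ u e2x : ℝ) ^ 2 + (inner ℝ v e2y : ℝ) ^ 2) * (Real.cos r / Real.sin r) -
        2 * (inner ℝ u e2x : ℝ) * (inner ℝ v e2y : ℝ) / Real.sin r := by
  have hxx : (inner ℝ x x : ℝ) = 1 := by
    rw [real_inner_self_eq_norm_sq, hx]; norm_num
  have hyy : (inner ℝ y y : ℝ) = 1 := by
    rw [real_inner_self_eq_norm_sq, hy]; norm_num
  have hpabs : |(inner ℝ x y : ℝ)| ≤ 1 := by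
    have := abs_real_inner_le_norm x y
    rwa [hx, hy, one_mul] at this
  have hp1 : -1 ≤ (inner ℝ x y : ℝ) := (abs_le.1 hpabs).1
  have hp2 : (inner ℝ x y : ℝ) ≤ 1 := (abs_le.1 hpabs).2
  have hcos : Real.cos r = inner ℝ x y := by rw [hr, Real.cos_arccos hp1 hp2]
  have hsinpos : 0 < Real.sin r := Real.sin_pos_of_pos_of_lt_pi hr0 hrπ
  have hsne : Real.sin r ≠ 0 := ne_of_gt hsinpos
  have hsin : Real.sin r = Real.sqrt (1 - (inner ℝ x y : ℝ) ^ 2) := by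
    rw [hr, Real.sin_arccos]
  have hD : (0:ℝ) < 1 - (inner ℝ x y : ℝ) ^ 2 := by
    rw [hsin] at hsinpos; exact Real.sqrt_pos.1 hsinpos
  have hpl : -1 < (inner ℝ x y : ℝ) := by nlinarith
  have hpu : (inner ℝ x y : ℝ) < 1 := by nlinarith
  -- e₂ vectors
  have hc2x : e2x = (Real.sin r)⁻¹ • cross3 x y := by rw [he2x, he1x, cross3_eq1]
  have hc2y : e2y = (Real.sin r)⁻¹ • cross3 x y := by rw [he2y, he1y, cross3_eq2]
  have hU2 : (inner ℝ u e2x : ℝ) = (Real.sin r)⁻¹ * (inner ℝ u (cross3 x y) : ℝ) := by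
    rw [hc2x, real_inner_smul_right]
  have hV2 : (inner ℝ v e2y : ℝ) = (Real.sin r)⁻¹ * (inner ℝ v (cross3 x y) : ℝ) := by
    rw [hc2y, real_inner_smul_right]
  -- Gram identities
  have guu : (inner ℝ u (cross3 x y) : ℝ) ^ 2 =
      (inner ℝ u u : ℝ) * (1 - (inner ℝ x y : ℝ) ^ 2) - (inner ℝ u y : ℝ) ^ 2 := by
    have h := gram2 u u x y
    rw [hxx, hyy, hux] at h
    linear_combination h
  have gvv : (inner ℝ v (cross3 x y) : ℝ) ^ 2 =
      (inner ℝ v v : ℝ) * (1 - (inner ℝ x y : ℝ) ^ 2) - (inner ℝ v x : ℝ) ^ 2 := by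
    have h := gram2 v v x y
    rw [hxx, hyy, hvy] at h
    linear_combination h
  have guv : (inner ℝ u (cross3 x y) : ℝ) * (inner ℝ v (cross3 x y) : ℝ) =
      (inner ℝ u v : ℝ) * (1 - (inner ℝ x y : ℝ) ^ 2)
        + (inner ℝ u y : ℝ) * (inner ℝ v x : ℝ) * (inner ℝ x y : ℝ) := by
    have h := gram2 u v x y
    rw [hxx, hyy, hux, hvy] at h
    linear_combination h
  have hnu : (inner ℝ u u : ℝ) = ‖u‖ ^ 2 := real_inner_self_eq_norm_sq u
  have hnv : (inner ℝ v v : ℝ) = ‖v‖ ^ 2 := real_inner_self_eq_norm_sq v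
  -- a/a cleanups
  have hAs : (‖u‖ / ‖u‖) * (inner ℝ u y : ℝ) = (inner ℝ u y : ℝ) := by
    rcases eq_or_ne u 0 with h | h
    · simp [h]
    · rw [div_self (norm_ne_zero_iff.2 h), one_mul]
  have hBq : (‖v‖ / ‖v‖) * (inner ℝ x v : ℝ) = (inner ℝ x v : ℝ) := by
    rcases eq_or_ne v 0 with h | h
    · simp [h]
    · rw [div_self (norm_ne_zero_iff.2 h), one_mul]
  have hABw : ((‖u‖ / ‖u‖) * (‖v‖ / ‖v‖)) * (inner ℝ u v : ℝ) = (inner ℝ u v : ℝ) := by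
    rcases eq_or_ne u 0 with h | h
    · simp [h]
    · rcases eq_or_ne v 0 with h' | h'
      · simp [h']
      · rw [div_self (norm_ne_zero_iff.2 h), div_self (norm_ne_zero_iff.2 h'), one_mul, one_mul]
  -- rewrite the function
  set a := ‖u‖
  set b := ‖v‖
  set p : ℝ := (inner ℝ x y : ℝ) with hp
  set q : ℝ := (inner ℝ x v : ℝ) with hq
  set s : ℝ := (inner ℝ u y : ℝ) with hs
  set w : ℝ := (inner ℝ u v : ℝ) with hw
  have hfun : (fun t =>
      Real.arccos
        (inner ℝ (Real.cos (a * t) • x + (Real.sin (a * t) / a) • u)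
          (Real.cos (b * t) • y + (Real.sin (b * t) / b) • v) : ℝ)) =
      fun t => Real.arccos (Ffun a b p q s w t) := by
    funext t
    congr 1
    simp only [Ffun, inner_add_left, inner_add_right, real_inner_smul_left,
      real_inner_smul_right, ← hp, ← hq, ← hs, ← hw]
    ring
  rw [hfun]
  have hF0 : Ffun a b p q s w 0 = p := by simp [Ffun]
  have hF10 : F1fun a b p q s w 0 = q + s := by
    have : F1fun a b p q s w 0 = (b / b) * q + (a / a) * s := by
      simp [F1fun]
    rw [this, hBq, hAs]
  have hK : HasDerivAt (F1fun a b p q s w) (-((a^2 + b^2) * p) + 2 * w) 0 := by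
    have := hF1deriv a b p q s w
    rwa [mul_assoc, hABw] at this
  rw [arccos_iteratedDeriv2 (Ffun a b p q s w) (F1fun a b p q s w)
    (-((a^2 + b^2) * p) + 2 * w) (hFderiv a b p q s w) hK
    (by rw [hF0]; exact hpl) (by rw [hF0]; exact hpu)]
  rw [hF0, hF10, hU2, hV2, hcos, ← hsin]
  have hqvx : (inner ℝ v x : ℝ) = q := by rw [hq]; exact real_inner_comm x v
  rw [hqvx] at gvv guv
  have hs2 : Real.sin r ^ 2 = 1 - p ^ 2 := by rw [hsin, Real.sq_sqrt hD.le]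
  set cu : ℝ := (inner ℝ u (cross3 x y) : ℝ) with hcu
  set cv : ℝ := (inner ℝ v (cross3 x y) : ℝ) with hcv
  have guu' : cu ^ 2 = a ^ 2 * Real.sin r ^ 2 - s ^ 2 := by
    rw [guu, hnu, hs2]
  have gvv' : cv ^ 2 = b ^ 2 * Real.sin r ^ 2 - q ^ 2 := by
    rw [gvv, hnv, hs2]
  have guv' : cu * cv = w * Real.sin r ^ 2 + s * q * p := by
    rw [guv, hs2]
  field_simp
  linear_combination (-(p)) * guu' + (-(p)) * gvv' +
    (2) * guv'
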